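/- arXiv:2508.05984 — 2 statements merged into one kernel-verified Lean document; each statement's English description precedes it below -/
import Mathlib

section
/- Let p be a seminorm on ℝ^d with kernel E = {x ∈ ℝ^d : p(x) = 0}, and let H : ℝ^d → ℝ^d and β ∈ [0,1) satisfy p(H(x) − H(y)) ≤ β · p(x − y) for all x, y ∈ ℝ^d. Then there exists a semi-norm fixed point Q* ∈ ℝ^d, i.e., a vector Q* with p(H(Q*) − Q*) = 0 (equivalently, H(Q*) − Q* ∈ E). -/
theorem contraction_aux' {V : Type*} [AddCommGroup V] [Module ℝ V] [FiniteDimensional ℝ V]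
    (q : V → ℝ) (hq0 : ∀ x : V, q x = 0 → x = 0) (hqz : q 0 = 0)
    (hqadd : ∀ x y : V, q (x + y) ≤ q x + q y)
    (hqsmul : ∀ (c : ℝ) (x : V), q (c • x) = |c| * q x)
    {β : ℝ} (hβ0 : 0 ≤ β) (hβ1 : β < 1) (f : V → V)
    (hf : ∀ x y : V, q (f x - f y) ≤ β * q (x - y)) : ∃ x : V, f x = x := by
  have hqneg : ∀ x : V, q (-x) = q x := by
    intro x
    have := hqsmul (-1) x
    simpa using this
  letI instN : NormedAddCommGroup V :=
    AddGroupNorm.toNormedAddCommGroup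
      { toFun := q
        map_zero' := hqz
        add_le' := hqadd
        neg' := hqneg
        eq_zero_of_map_eq_zero' := fun x hx => hq0 x hx }
  have hnorm : ∀ x : V, ‖x‖ = q x := fun _ => rfl
  letI instS : NormedSpace ℝ V :=
    { norm_smul_le := fun c x => by
        rw [hnorm, hnorm, hqsmul, Real.norm_eq_abs] }
  haveI : CompleteSpace V := FiniteDimensional.complete ℝ V
  have hlip : LipschitzWith (⟨β, hβ0⟩ : NNReal) f := by
    refine lipschitzWith_iff_dist_le_mul.mpr ?_
    intro x y
    rw [dist_eq_norm, dist_eq_norm, hnorm, hnorm]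
    exact hf x y
  have hc : ContractingWith (⟨β, hβ0⟩ : NNReal) f := ⟨by exact_mod_cast hβ1, hlip⟩
  obtain ⟨y, hy, -⟩ := hc.exists_fixedPoint 0
    (by rw [edist_dist]; exact ENNReal.ofReal_ne_top)
  exact ⟨y, hy⟩

/-- A seminorm contraction on ℝ^d admits a semi-norm fixed point:
a vector `Q*` with `p (H Q* - Q*) = 0`. -/
theorem seminorm_contraction_exists_fixed_point
    (d : ℕ) (hd : 0 < d)
    (p : (Fin d → ℝ) → ℝ)
    (hp_nonneg : ∀ x, 0 ≤ p x)
    (hp_homog : ∀ (c : ℝ) (x : Fin d → ℝ), p (c • x) = |c| * p x)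
    (hp_subadd : ∀ x y : Fin d → ℝ, p (x + y) ≤ p x + p y)
    (H : (Fin d → ℝ) → (Fin d → ℝ))
    (β : ℝ) (hβ : β ∈ Set.Ico (0 : ℝ) 1)
    (hcontr : ∀ x y : Fin d → ℝ, p (H x - H y) ≤ β * p (x - y)) :
    ∃ Qstar : Fin d → ℝ, p (H Qstar - Qstar) = 0 := by
  classical
  have hp0 : p 0 = 0 := by
    have := hp_homog 0 0
    simpa using this
  have hpneg : ∀ x, p (-x) = p x := by
    intro x
    have := hp_homog (-1) x
    simpa using this
  -- kernel submodule
  set E : Submodule ℝ (Fin d → ℝ) :=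
    { carrier := {x | p x = 0}
      zero_mem' := hp0
      add_mem' := by
        intro a b ha hb
        have h1 : p (a + b) ≤ p a + p b := hp_subadd a b
        have h2 : 0 ≤ p (a + b) := hp_nonneg _
        simp only [Set.mem_setOf_eq] at ha hb ⊢
        linarith
      smul_mem' := by
        intro c x hx
        simp only [Set.mem_setOf_eq] at hx ⊢
        rw [hp_homog, hx, mul_zero] } with hE
  -- p is insensitive to adding elements of E
  have hpE : ∀ (a e : Fin d → ℝ), e ∈ E → p (a + e) = p a := by
    intro a e he
    have he' : p e = 0 := he
    have hne' : p (-e) = 0 := by rw [hpneg]; exact he'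
    have h1 : p (a + e) ≤ p a + p e := hp_subadd a e
    have h2 : p a ≤ p (a + e) + p (-e) := by
      have := hp_subadd (a + e) (-e)
      simpa using this
    linarith
  obtain ⟨F, hF⟩ := Submodule.exists_isCompl E
  -- the projection onto F along E
  let π := F.projectionOnto E hF.symm
  have hπ : ∀ x : Fin d → ℝ, x - (π x : Fin d → ℝ) ∈ E := by
    intro x
    have hsum := Submodule.projection_add_projection_eq_self hF.symm x
    have h2 : x - (π x : Fin d → ℝ) =
        ((E.projectionOnto F hF.symm.symm) x : Fin d → ℝ) := by
      rw [sub_eq_iff_eq_add']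
      exact hsum.symm
    rw [h2]
    exact ((E.projectionOnto F hF.symm.symm) x).2
  have hproj : ∀ a b : Fin d → ℝ, p ((π a : Fin d → ℝ) - π b) = p (a - b) := by
    intro a b
    have e1 : (a - (π a : Fin d → ℝ)) ∈ E := hπ a
    have e2 : (b - (π b : Fin d → ℝ)) ∈ E := hπ b
    have hab : a - b = ((π a : Fin d → ℝ) - π b) +
        ((a - (π a : Fin d → ℝ)) - (b - (π b : Fin d → ℝ))) := by abel
    rw [hab, hpE]
    exact E.sub_mem e1 e2
  -- contracting map on F
  let f : ↥F → ↥F := fun x => π (H x)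
  let q : ↥F → ℝ := fun x => p x
  have hq0 : ∀ x : ↥F, q x = 0 → x = 0 := by
    intro a ha
    have haE : (a : Fin d → ℝ) ∈ E := ha
    have hmem : (a : Fin d → ℝ) ∈ E ⊓ F := ⟨haE, a.2⟩
    rw [hF.inf_eq_bot] at hmem
    exact Subtype.ext hmem
  have hqz : q 0 = 0 := hp0
  have hqadd : ∀ x y : ↥F, q (x + y) ≤ q x + q y := fun x y => hp_subadd x y
  have hqsmul : ∀ (c : ℝ) (x : ↥F), q (c • x) = |c| * q x := fun c x => hp_homog c x
  have hf : ∀ x y : ↥F, q (f x - f y) ≤ β * q (x - y) := by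
    intro x y
    show p ((π (H x) : Fin d → ℝ) - π (H y)) ≤ β * p ((x : Fin d → ℝ) - y)
    rw [hproj]
    exact hcontr _ _
  obtain ⟨y, hy⟩ := contraction_aux' q hq0 hqz hqadd hqsmul hβ.1 hβ.2 f hf
  refine ⟨(y : Fin d → ℝ), ?_⟩
  have hfix : (π (H (y : Fin d → ℝ)) : Fin d → ℝ) = (y : Fin d → ℝ) :=
    congrArg Subtype.val hy
  have h := hπ (H (y : Fin d → ℝ))
  rwa [hfix] at h
end

section
/- Let p be a seminorm on ℝ^d with kernel E = {x : p(x) = 0}, and let ν be a monotone norm on ℝ^d such that p(x) ≤ ν(x) for all x and p(x) = min_{e ∈ E} ν(x − e) with the minimum attained. Let C_A, C_b ≥ 0 and C_* > 0 be constants, let Q, Q* ∈ ℝ^d, let b_Q, b_* ∈ ℝ^d, and let A_Q, A_* be d×d real matrices such that: (i) A_Q·e = e and A_*·e = e for every e ∈ E; (ii) if p(Q − Q*) < C_* then b_Q = b_* and A_Q = A_*; (iii) ν(b_Q − b_*) ≤ 2C_b and ν((A_Q − A_*)·x) ≤ 2C_A·ν(x) for all x ∈ ℝ^d; and (iv) the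 vector ξ := (b_Q − b_*) + (A_Q − A_*)·Q satisfies the coordinatewise sandwich 0 ≤ ξ ≤ (b_Q − b_*) + (A_Q − A_*)·(Q − Q*). Then p(ξ) ≤ 2·(C_A/C_* + C_b/C_*²)·p(Q − Q*)². -/
/-- Quadratic bound on the nonlinear perturbation `ξ` of the stochastic fixed-point
iteration, obtained by coupling the seminorm `p` with its induced monotone norm `ν`. -/
theorem nonlinear_perturbation_quadratic_bound
    (d : ℕ) (hd : 0 < d)
    (p ν : (Fin d → ℝ) → ℝ)
    (hp_nonneg : ∀ x, 0 ≤ p x)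
    (hp_homog : ∀ (c : ℝ) (x : Fin d → ℝ), p (c • x) = |c| * p x)
    (hp_subadd : ∀ x y : Fin d → ℝ, p (x + y) ≤ p x + p y)
    (hν_nonneg : ∀ x, 0 ≤ ν x)
    (hν_homog : ∀ (c : ℝ) (x : Fin d → ℝ), ν (c • x) = |c| * ν x)
    (hν_subadd : ∀ x y : Fin d → ℝ, ν (x + y) ≤ ν x + ν y)
    (hν_def : ∀ x : Fin d → ℝ, ν x = 0 → x = 0)
    (hν_mono : ∀ x y : Fin d → ℝ, 0 ≤ x → x ≤ y → ν x ≤ ν y)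
    (hple : ∀ x : Fin d → ℝ, p x ≤ ν x)
    (hattain : ∀ x : Fin d → ℝ, ∃ e : Fin d → ℝ, p e = 0 ∧ ν (x - e) = p x)
    (hmin : ∀ (x e : Fin d → ℝ), p e = 0 → p x ≤ ν (x - e))
    (CA Cb Cstar : ℝ) (hCA : 0 ≤ CA) (hCb : 0 ≤ Cb) (hCstar : 0 < Cstar)
    (Q Qstar bQ bstar : Fin d → ℝ)
    (AQ Astar : Matrix (Fin d) (Fin d) ℝ)
    (hAQe : ∀ e : Fin d → ℝ, p e = 0 → AQ.mulVec e = e)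
    (hAse : ∀ e : Fin d → ℝ, p e = 0 → Astar.mulVec e = e)
    (hdich : p (Q - Qstar) < Cstar → bQ = bstar ∧ AQ = Astar)
    (hb_bound : ν (bQ - bstar) ≤ 2 * Cb)
    (hA_bound : ∀ x : Fin d → ℝ, ν ((AQ - Astar).mulVec x) ≤ 2 * CA * ν x)
    (hsand_lo : (0 : Fin d → ℝ) ≤ (bQ - bstar) + (AQ - Astar).mulVec Q)
    (hsand_hi : (bQ - bstar) + (AQ - Astar).mulVec Q ≤
      (bQ - bstar) + (AQ - Astar).mulVec (Q - Qstar)) :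
    p ((bQ - bstar) + (AQ - Astar).mulVec Q) ≤
      2 * (CA / Cstar + Cb / Cstar ^ 2) * p (Q - Qstar) ^ 2 := by
  have hp0 : p 0 = 0 := by
    have := hp_homog 0 0
    simpa using this
  by_cases hcase : p (Q - Qstar) < Cstar
  · obtain ⟨hb, hA⟩ := hdich hcase
    have hzero : (bQ - bstar) + (AQ - Astar).mulVec Q = 0 := by
      have hhi : (bQ - bstar) + (AQ - Astar).mulVec Q ≤ 0 := by
        have : (bQ - bstar) + (AQ - Astar).mulVec (Q - Qstar) = 0 := by
          simp [hb, hA, Matrix.mulVec]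
        calc (bQ - bstar) + (AQ - Astar).mulVec Q ≤ _ := hsand_hi
          _ = 0 := this
      exact le_antisymm hhi hsand_lo
    rw [hzero, hp0]
    positivity
  · push_neg at hcase
    set t := p (Q - Qstar) with ht
    have htpos : 0 < t := lt_of_lt_of_le hCstar hcase
    obtain ⟨e, hpe, hνe⟩ := hattain (Q - Qstar)
    have hker : (AQ - Astar).mulVec e = 0 := by
      rw [Matrix.sub_mulVec, hAQe e hpe, hAse e hpe, sub_self]
    have hAeq : (AQ - Astar).mulVec (Q - Qstar) = (AQ - Astar).mulVec (Q - Qstar - e) := by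
      conv_rhs => rw [Matrix.mulVec_sub, hker, sub_zero]
    have hAbd : ν ((AQ - Astar).mulVec (Q - Qstar)) ≤ 2 * CA * t := by
      rw [hAeq]
      calc ν ((AQ - Astar).mulVec (Q - Qstar - e)) ≤ 2 * CA * ν (Q - Qstar - e) :=
            hA_bound _
        _ = 2 * CA * t := by rw [hνe]
    have hmain : p ((bQ - bstar) + (AQ - Astar).mulVec Q) ≤ 2 * Cb + 2 * CA * t := by
      calc p ((bQ - bstar) + (AQ - Astar).mulVec Q)
          ≤ ν ((bQ - bstar) + (AQ - Astar).mulVec Q) := hple _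
        _ ≤ ν ((bQ - bstar) + (AQ - Astar).mulVec (Q - Qstar)) :=
            hν_mono _ _ hsand_lo hsand_hi
        _ ≤ ν (bQ - bstar) + ν ((AQ - Astar).mulVec (Q - Qstar)) := hν_subadd _ _
        _ ≤ 2 * Cb + 2 * CA * t := add_le_add hb_bound hAbd
    have h1 : 2 * Cb ≤ 2 * Cb / Cstar ^ 2 * t ^ 2 := by
      rw [div_mul_eq_mul_div, le_div_iff₀ (by positivity)]
      have : Cstar ^ 2 ≤ t ^ 2 := by
        apply pow_le_pow_left₀ hCstar.le hcase
      nlinarith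
    have h2 : 2 * CA * t ≤ 2 * CA / Cstar * t ^ 2 := by
      rw [div_mul_eq_mul_div, le_div_iff₀ hCstar]
      nlinarith [mul_nonneg (mul_nonneg hCA (sub_nonneg.2 hcase)) htpos.le]
    calc p ((bQ - bstar) + (AQ - Astar).mulVec Q) ≤ 2 * Cb + 2 * CA * t := hmain
      _ ≤ 2 * Cb / Cstar ^ 2 * t ^ 2 + 2 * CA / Cstar * t ^ 2 := add_le_add h1 h2
      _ = 2 * (CA / Cstar + Cb / Cstar ^ 2) * t ^ 2 := by ring
end
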